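/- A ring R is weakly nil-clean if and only if J(R) is nil and R/J(R) is weakly nil-clean. -/
import Mathlib


/-- A ring is weakly nil-clean if every element is a sum or a difference of a
nilpotent and an idempotent. -/
def IsWeaklyNilClean (R : Type*) [Ring R] : Prop :=
  ∀ a : R, ∃ b e : R, IsNilpotent b ∧ IsIdempotentElem e ∧ (a = b + e ∨ a = b - e)

lemma idem_mem_jacobson_bot_eq_zero {R : Type*} [Ring R] {e : R}
    (he : IsIdempotentElem e) (hmem : e ∈ (⊥ : TwoSidedIdeal R).jacobson) : e = 0 := by
  rw [TwoSidedIdeal.mem_jacobson_iff] at hmem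
  obtain ⟨z, hz⟩ := hmem (-1)
  rw [TwoSidedIdeal.mem_bot] at hz
  have hz' : z * (1 - e) = 1 := by
    rw [mul_neg_one, neg_mul] at hz
    have h2 : z * (1 - e) - 1 = 0 := by rw [mul_sub, mul_one, ← hz]; abel
    exact sub_eq_zero.mp h2
  calc e = (z * (1 - e)) * e := by rw [hz', one_mul]
    _ = z * (e - e * e) := by noncomm_ring
    _ = 0 := by rw [he.eq, sub_self, mul_zero]

theorem weaklyNilClean_iff_jacobson {R : Type*} [Ring R] :
    IsWeaklyNilClean R ↔
      (∀ x ∈ (⊥ : TwoSidedIdeal R).jacobson, IsNilpotent x) ∧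
        IsWeaklyNilClean ((⊥ : TwoSidedIdeal R).jacobson.ringCon.Quotient) := by
  set J := (⊥ : TwoSidedIdeal R).jacobson with hJ
  set f : R →+* J.ringCon.Quotient := J.ringCon.mk' with hf
  have hsurj : Function.Surjective f := Quotient.mk''_surjective
  have hker : ∀ x : R, f x = 0 ↔ x ∈ J := by
    intro x
    show (x : J.ringCon.Quotient) = ((0 : R) : J.ringCon.Quotient) ↔ _
    rw [RingCon.eq]
    exact Iff.rfl
  constructor
  · intro h
    constructor
    · -- J is nil
      intro x hx
      obtain ⟨b, e, hb, he, hcase⟩ := h x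
      have hfx : f x = 0 := (hker x).mpr hx
      have hfe : IsNilpotent (f e) := by
        rcases hcase with rfl | rfl
        · rw [map_add] at hfx
          rw [eq_neg_of_add_eq_zero_right hfx]
          exact (hb.map f).neg
        · rw [map_sub] at hfx
          rw [← sub_eq_zero.mp hfx]
          exact hb.map f
      have hfe0 : f e = 0 :=
        IsIdempotentElem.eq_zero_of_isNilpotent (he.map f) hfe
      have he0 : e = 0 := idem_mem_jacobson_bot_eq_zero he ((hker e).mp hfe0)
      rcases hcase with rfl | rfl
      · simpa [he0] using hb
      · simpa [he0] using hb
    · -- quotient is weakly nil-clean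
      intro q
      obtain ⟨a, rfl⟩ := hsurj q
      obtain ⟨b, e, hb, he, hcase⟩ := h a
      exact ⟨f b, f e, hb.map f, he.map f, by
        rcases hcase with rfl | rfl
        · left; rw [map_add]
        · right; rw [map_sub]⟩
  · rintro ⟨hnil, hq⟩
    have hkernil : ∀ x ∈ RingHom.ker f, IsNilpotent x := by
      intro x hx
      exact hnil x ((hker x).mp (RingHom.mem_ker.mp hx))
    have hlift : ∀ x : R, IsNilpotent (f x) → IsNilpotent x := by
      rintro x ⟨n, hn⟩
      have : x ^ n ∈ RingHom.ker f := by
        rw [RingHom.mem_ker, map_pow]; exact hn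
      obtain ⟨m, hm⟩ := hkernil _ this
      exact ⟨n * m, by rw [pow_mul]; exact hm⟩
    intro a
    obtain ⟨b', e', hb', he', hcase⟩ := hq (f a)
    obtain ⟨e, he, hfe⟩ :=
      exists_isIdempotentElem_eq_of_ker_isNilpotent f hkernil e' (hsurj e') he'
    rcases hcase with hsum | hdiff
    · refine ⟨a - e, e, ?_, he, Or.inl (by abel)⟩
      apply hlift
      rw [map_sub, hfe, hsum]
      simpa using hb'
    · refine ⟨a + e, e, ?_, he, Or.inr (by abel)⟩
      apply hlift
      rw [map_add, hfe, hdiff]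
      simpa using hb'
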